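/- No two of the five directed sets 1 (a one-element order), ω, ω₁, ω × ω₁, and ⟨[ω₁]^{<ω}, ⊆⟩ are Tukey equivalent. -/

import Mathlib

open Cardinal

/-- A subset `S` of a quasiorder `⟨α, r⟩` is bounded if it has an upper bound. -/
def TBounded {α : Type*} (r : α → α → Prop) (S : Set α) : Prop :=
  ∃ b, ∀ x ∈ S, r x b

/-- A subset `C` of `⟨α, r⟩` is cofinal if every element lies below a member of `C`. -/
def TCofinal {α : Type*} (r : α → α → Prop) (C : Set α) : Prop :=
  ∀ x, ∃ c ∈ C, r x c

/-- A Tukey map: the image of every unbounded set is unbounded. -/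
def IsTukeyMap {α β : Type*} (ra : α → α → Prop) (rb : β → β → Prop) (f : α → β) : Prop :=
  ∀ S : Set α, ¬ TBounded ra S → ¬ TBounded rb (f '' S)

/-- Tukey reducibility `P ≤_T Q`: there is a Tukey map from `P` to `Q`. -/
def TukeyLE {α β : Type*} (ra : α → α → Prop) (rb : β → β → Prop) : Prop :=
  ∃ f : α → β, IsTukeyMap ra rb f

/-- Tukey equivalence `P ≡_T Q`. -/
def TukeyEquiv {α β : Type*} (ra : α → α → Prop) (rb : β → β → Prop) : Prop :=
  TukeyLE ra rb ∧ TukeyLE rb ra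

/-- Strict Tukey reducibility `P <_T Q`. -/
def TukeyLT {α β : Type*} (ra : α → α → Prop) (rb : β → β → Prop) : Prop :=
  TukeyLE ra rb ∧ ¬ TukeyLE rb ra

/-- A directed set: a preorder in which every finite subset (in particular `∅` and pairs)
has an upper bound; equivalently, a nonempty directed preorder. -/
structure IsDirectedSet {α : Type*} (r : α → α → Prop) : Prop where
  nonempty : Nonempty α
  refl : ∀ x, r x x
  trans : ∀ {x y z}, r x y → r y z → r x z
  directed : ∀ x y, ∃ z, r x z ∧ r y z

noncomputable section

/-- The first uncountable ordinal `ω₁` as a linearly ordered type. -/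
abbrev Omega1 : Type := (Cardinal.aleph 1).ord.ToType

/-- The one-element directed set `1`. -/
def rOne : PUnit → PUnit → Prop := (· ≤ ·)

/-- `ω` with its usual order. -/
def rOmega : ℕ → ℕ → Prop := (· ≤ ·)

/-- `ω₁` with its usual order. -/
def rOmega1 : Omega1 → Omega1 → Prop := (· ≤ ·)

/-- `ω × ω₁` with the coordinatewise order. -/
def rProd : ℕ × Omega1 → ℕ × Omega1 → Prop := fun a b => a.1 ≤ b.1 ∧ a.2 ≤ b.2

/-- `[ω₁]^{<ω}` ordered by inclusion. -/
def rFin : Finset Omega1 → Finset Omega1 → Prop := (· ⊆ ·)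

/- ### Auxiliary lemmas -/

lemma omega1_mk : #Omega1 = Cardinal.aleph 1 := Cardinal.mk_ord_toType _

lemma omega1_univ_uncountable : ¬ (Set.univ : Set Omega1).Countable := by
  rw [Cardinal.countable_iff_lt_aleph_one, Cardinal.mk_univ, omega1_mk]
  exact lt_irrefl _

instance : Infinite Omega1 := by
  rw [Cardinal.infinite_iff, omega1_mk]
  exact (Cardinal.aleph0_lt_aleph_one).le

lemma omega1_Iic_countable (b : Omega1) : (Set.Iic b).Countable := by
  have h : (Set.Iio b).Countable := by
    rw [Cardinal.countable_iff_lt_aleph_one]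
    exact Cardinal.mk_Iio_ord_toType b
  rw [← Set.Iio_insert]
  exact h.insert b

/-- Every countable subset of `ω₁` is bounded. -/
lemma omega1_countable_bdd {S : Set Omega1} (hS : S.Countable) : ∃ b, ∀ x ∈ S, x ≤ b := by
  haveI := hS.to_subtype
  set e := Ordinal.ToType.mk (o := (Cardinal.aleph 1).ord) with he
  set o : S → Ordinal := fun x => (e.symm x.1).1 with ho
  have hlt : ∀ x, o x < (Cardinal.aleph 1).ord := fun x => (e.symm x.1).2
  have hsup : iSup o < (Cardinal.aleph 1).ord := by
    have := Ordinal.iSup_lt_omega_one (f := o) (by simpa using hlt); simpa using this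
  refine ⟨e ⟨iSup o, hsup⟩, fun x hx => ?_⟩
  have h1 : o ⟨x, hx⟩ ≤ iSup o := Ordinal.le_iSup o ⟨x, hx⟩
  have h2 : e.symm x ≤ ⟨iSup o, hsup⟩ := h1
  calc x = e (e.symm x) := (e.apply_symm_apply x).symm
    _ ≤ _ := e.monotone h2

/-- Every set bounded in `ω₁` is countable. -/
lemma omega1_bdd_countable {S : Set Omega1} (h : TBounded rOmega1 S) : S.Countable := by
  obtain ⟨b, hb⟩ := h
  exact (omega1_Iic_countable b).mono fun x hx => hb x hx

/-- An uncountable subset of `ω₁` is unbounded. -/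
lemma omega1_uncountable_unbdd {S : Set Omega1} (h : ¬ S.Countable) : ¬ TBounded rOmega1 S :=
  fun hb => h (omega1_bdd_countable hb)

/-- A pigeonhole fact: a map `ω₁ → ℕ` has an uncountable fiber. -/
lemma exists_uncountable_fiber (g : Omega1 → ℕ) : ∃ n, ¬ (g ⁻¹' {n}).Countable := by
  by_contra h
  push_neg at h
  apply omega1_univ_uncountable
  have : (Set.univ : Set Omega1) = ⋃ n, g ⁻¹' {n} := by
    ext x; simp
  rw [this]
  exact Set.countable_iUnion h

lemma not_tukeyLE {α β : Type*} {ra : α → α → Prop} {rb : β → β → Prop}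
    (h : ∀ f : α → β, ∃ S : Set α, ¬ TBounded ra S ∧ TBounded rb (f '' S)) :
    ¬ TukeyLE ra rb := by
  rintro ⟨f, hf⟩
  obtain ⟨S, h1, h2⟩ := h f
  exact hf S h1 h2

lemma tbounded_one (S : Set PUnit) : TBounded rOne S :=
  ⟨PUnit.unit, fun _ _ => le_refl _⟩

lemma nat_univ_unbdd : ¬ TBounded rOmega (Set.univ : Set ℕ) := by
  rintro ⟨b, hb⟩
  exact absurd (hb (b + 1) trivial) (by simp [rOmega])

/-- A set of singletons over an infinite index set is unbounded in `[ω₁]^{<ω}`. -/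
lemma fin_singletons_unbdd {A : Set Omega1} (hA : A.Infinite) :
    ¬ TBounded rFin ((fun a => ({a} : Finset Omega1)) '' A) := by
  rintro ⟨F, hF⟩
  apply hA
  apply Set.Finite.subset F.finite_toSet
  intro a ha
  have := hF {a} ⟨a, ha, rfl⟩
  simpa [rFin] using this

/-- If the second coordinates are unbounded, a set is unbounded in `ω × ω₁`. -/
lemma prod_snd_unbdd {S : Set (ℕ × Omega1)} (h : ¬ TBounded rOmega1 (Prod.snd '' S)) :
    ¬ TBounded rProd S := by
  rintro ⟨⟨m, c⟩, hc⟩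
  exact h ⟨c, by rintro x ⟨⟨k, y⟩, hy, rfl⟩; exact (hc _ hy).2⟩

/-- If the first coordinates are unbounded, a set is unbounded in `ω × ω₁`. -/
lemma prod_fst_unbdd {S : Set (ℕ × Omega1)} (h : ¬ TBounded rOmega (Prod.fst '' S)) :
    ¬ TBounded rProd S := by
  rintro ⟨⟨m, c⟩, hc⟩
  exact h ⟨m, by rintro x ⟨⟨k, y⟩, hy, rfl⟩; exact (hc _ hy).1⟩

/- ### The ten failing reductions -/

lemma not_omega_le_one : ¬ TukeyLE rOmega rOne :=
  not_tukeyLE fun f => ⟨Set.univ, nat_univ_unbdd, tbounded_one _⟩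

lemma not_omega1_le_one : ¬ TukeyLE rOmega1 rOne :=
  not_tukeyLE fun f => ⟨Set.univ, omega1_uncountable_unbdd omega1_univ_uncountable,
    tbounded_one _⟩

lemma not_prod_le_one : ¬ TukeyLE rProd rOne :=
  not_tukeyLE fun f => ⟨Set.univ, prod_fst_unbdd (by
    rw [Set.image_univ]
    intro hb
    apply nat_univ_unbdd
    obtain ⟨b, hb⟩ := hb
    exact ⟨b, fun n _ => hb n ⟨(n, Classical.arbitrary Omega1), rfl⟩⟩), tbounded_one _⟩

lemma not_fin_le_one : ¬ TukeyLE rFin rOne :=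
  not_tukeyLE fun f => ⟨_, fin_singletons_unbdd (Set.infinite_univ (α := Omega1)),
    tbounded_one _⟩

lemma not_omega_le_omega1 : ¬ TukeyLE rOmega rOmega1 :=
  not_tukeyLE fun f => ⟨Set.univ, nat_univ_unbdd, by
    obtain ⟨b, hb⟩ := omega1_countable_bdd ((Set.countable_univ).image f)
    exact ⟨b, hb⟩⟩

lemma not_prod_le_omega : ¬ TukeyLE rProd rOmega := by
  apply not_tukeyLE
  intro f
  obtain ⟨n, hn⟩ := _root_.exists_uncountable_fiber (fun b => f (0, b))
  refine ⟨(fun b => ((0 : ℕ), b)) '' ((fun b => f (0, b)) ⁻¹' {n}), ?_, n, ?_⟩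
  · apply prod_snd_unbdd
    apply omega1_uncountable_unbdd
    intro hc
    apply hn
    apply hc.mono
    rintro x hx
    exact ⟨((0 : ℕ), x), ⟨x, hx, rfl⟩, rfl⟩
  · rintro x ⟨p, ⟨b, hb, rfl⟩, rfl⟩
    simp only [Set.mem_preimage, Set.mem_singleton_iff] at hb
    exact le_of_eq hb

lemma not_fin_le_omega : ¬ TukeyLE rFin rOmega := by
  apply not_tukeyLE
  intro f
  obtain ⟨n, hn⟩ := _root_.exists_uncountable_fiber (fun b => f {b})
  refine ⟨(fun a => ({a} : Finset Omega1)) '' ((fun b => f {b}) ⁻¹' {n}), ?_, n, ?_⟩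
  · exact fin_singletons_unbdd fun hfin => hn hfin.countable
  · rintro x ⟨F, ⟨b, hb, rfl⟩, rfl⟩
    simp only [Set.mem_preimage, Set.mem_singleton_iff] at hb
    exact le_of_eq hb

lemma not_prod_le_omega1 : ¬ TukeyLE rProd rOmega1 := by
  apply not_tukeyLE
  intro f
  refine ⟨(fun n => (n, Classical.arbitrary Omega1)) '' Set.univ, ?_, ?_⟩
  · apply prod_fst_unbdd
    intro hb
    apply nat_univ_unbdd
    obtain ⟨b, hb⟩ := hb
    exact ⟨b, fun n _ => hb n ⟨(n, Classical.arbitrary Omega1), ⟨n, trivial, rfl⟩, rfl⟩⟩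
  · obtain ⟨b, hb⟩ := omega1_countable_bdd
      (((Set.countable_univ (α := ℕ)).image (fun n => (n, Classical.arbitrary Omega1))).image f)
    exact ⟨b, hb⟩

lemma not_fin_le_omega1 : ¬ TukeyLE rFin rOmega1 := by
  apply not_tukeyLE
  intro f
  set e := Infinite.natEmbedding Omega1
  set A : Set Omega1 := Set.range e
  refine ⟨(fun a => ({a} : Finset Omega1)) '' A, ?_, ?_⟩
  · exact fin_singletons_unbdd (Set.infinite_range_of_injective e.injective)
  · obtain ⟨b, hb⟩ := omega1_countable_bdd ((Set.countable_range e).image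
      (fun a => ({a} : Finset Omega1)) |>.image f)
    exact ⟨b, hb⟩

lemma not_fin_le_prod : ¬ TukeyLE rFin rProd := by
  apply not_tukeyLE
  intro f
  obtain ⟨n, hn⟩ := _root_.exists_uncountable_fiber (fun b => (f {b}).1)
  have hAinf : ((fun b => (f {b}).1) ⁻¹' {n}).Infinite := fun hfin => hn hfin.countable
  set e := hAinf.natEmbedding
  set A : Set Omega1 := Subtype.val '' Set.range e
  have hAsub : A ⊆ (fun b => (f {b}).1) ⁻¹' {n} := by
    rintro x ⟨⟨y, hy⟩, _, rfl⟩; exact hy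
  have hAcnt : A.Countable := (Set.countable_range e).image _
  have hAinf' : A.Infinite :=
    Set.infinite_of_injective_forall_mem (f := fun k : ℕ => ((e k : _) : Omega1))
      (fun a b hab => e.injective (Subtype.val_injective hab))
      (fun k => ⟨e k, ⟨k, rfl⟩, rfl⟩)
  refine ⟨(fun a => ({a} : Finset Omega1)) '' A, fin_singletons_unbdd hAinf', ?_⟩
  obtain ⟨b, hb⟩ := omega1_countable_bdd (S := Prod.snd '' (f '' ((fun a => ({a} : Finset Omega1)) '' A)))
    (((hAcnt.image _).image f).image _)
  refine ⟨(n, b), ?_⟩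
  rintro x ⟨F, ⟨a, ha, rfl⟩, rfl⟩
  constructor
  · exact le_of_eq (hAsub ha)
  · exact hb _ ⟨f {a}, ⟨{a}, ⟨a, ha, rfl⟩, rfl⟩, rfl⟩

theorem stmt7 :
    ¬ TukeyEquiv rOne rOmega ∧ ¬ TukeyEquiv rOne rOmega1 ∧
    ¬ TukeyEquiv rOne rProd ∧ ¬ TukeyEquiv rOne rFin ∧
    ¬ TukeyEquiv rOmega rOmega1 ∧ ¬ TukeyEquiv rOmega rProd ∧
    ¬ TukeyEquiv rOmega rFin ∧ ¬ TukeyEquiv rOmega1 rProd ∧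
    ¬ TukeyEquiv rOmega1 rFin ∧ ¬ TukeyEquiv rProd rFin :=
  ⟨fun h => not_omega_le_one h.2, fun h => not_omega1_le_one h.2,
   fun h => not_prod_le_one h.2, fun h => not_fin_le_one h.2,
   fun h => not_omega_le_omega1 h.1, fun h => not_prod_le_omega h.2,
   fun h => not_fin_le_omega h.2, fun h => not_prod_le_omega1 h.2,
   fun h => not_fin_le_omega1 h.2, fun h => not_fin_le_prod h.2⟩

end
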